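/- Double contraction of the integrability condition (equation (7), flat space). Let n ≥ 3, and let W_{abcd} (twice continuously differentiable) and L_{abc} (three times continuously differentiable, with L_{abc} = L_{[ab]c} and L_{ab}^{b} = 0) be tensor fields on flat ℝⁿ satisfying equation (5), with W additionally satisfying W_{abcd} = W_{[ab]cd} = W_{ab[cd]}, W_{abcd} = W_{cdab} and W^a_{bad} = 0. Then W^{ai}_{cj;i}^{j} = ((n−3)/(n−2)) ( L^{ai}_{c;ij}^{j} + L_{c}^{ia}_{;ij}^{j} − L^{ji}_{c;ij}^{a} − L_{c}^{ij}_{;ij}^{a} − L^{ai}_{j;ic}^{j} − L_{j}^{ia}_{;ic}^{j} ). -/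

import Mathlib

open scoped ContDiff

noncomputable section

/-- Partial derivative `∂ᵢ f` of a scalar field on flat `ℝⁿ` (points represented as
`Fin n → ℝ`, standard coordinates) in the `i`-th coordinate direction.  In Cartesian
coordinates on flat space this is the covariant derivative `;i`. -/
def pd {n : ℕ} (i : Fin n) (f : (Fin n → ℝ) → ℝ) : (Fin n → ℝ) → ℝ :=
  fun x => fderiv ℝ f x (Pi.single i 1)

/-- Components `η_{ab}` of the constant diagonal metric with diagonal entries `η a = ±1`;
since the entries are `±1` these coincide with the components `η^{ab}` of the inverse
metric. -/
def gm {n : ℕ} (η : Fin n → ℝ) (a b : Fin n) : ℝ := if a = b then η a else 0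

/-- Antisymmetrization over two index slots. -/
def asym2 {n : ℕ} (T : Fin n → Fin n → ℝ) (a b : Fin n) : ℝ := (T a b - T b a) / 2

/-- Antisymmetrization over three index slots. -/
def asym3 {n : ℕ} (T : Fin n → Fin n → Fin n → ℝ) (a b c : Fin n) : ℝ :=
  (T a b c - T a c b - T b a c + T b c a + T c a b - T c b a) / 6

/-- Simultaneous antisymmetrization over a pair of upper slots and a pair of lower slots. -/
def asym22 {n : ℕ} (T : Fin n → Fin n → Fin n → Fin n → ℝ) (a b c d : Fin n) : ℝ :=
  (T a b c d - T b a c d - T a b d c + T b a d c) / 4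

/-- Simultaneous antisymmetrization over a triple of upper slots and a triple of lower
slots (arguments ordered as `T upper₁ upper₂ upper₃ lower₁ lower₂ lower₃`). -/
def asym33 {n : ℕ} (T : Fin n → Fin n → Fin n → Fin n → Fin n → Fin n → ℝ)
    (a b f c d e : Fin n) : ℝ :=
  asym3 (fun a b f => asym3 (fun c d e => T a b f c d e) c d e) a b f

/-- A Weyl candidate: a 4-tensor field with the index symmetries (3a)–(3d):
antisymmetry in the first and in the second index pair, symmetry under interchange of the
two pairs, vanishing cyclic sum `W_{a[bcd]} = 0`, and vanishing trace `W^a{}_{bad} = 0`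
(the trace being taken with the metric `η`). -/
def WeylCandidate {n : ℕ} (η : Fin n → ℝ)
    (W : (Fin n → ℝ) → Fin n → Fin n → Fin n → Fin n → ℝ) : Prop :=
  (∀ x a b c d, W x a b c d = - W x b a c d) ∧
  (∀ x a b c d, W x a b c d = - W x a b d c) ∧
  (∀ x a b c d, W x a b c d = W x c d a b) ∧
  (∀ x a b c d, asym3 (fun b c d => W x a b c d) b c d = 0) ∧
  (∀ x b d, ∑ a, η a * W x a b a d = 0)

/-- The right-hand side of the Lanczos potential equation (4), in the equivalent fully
lowered form (the free indices `a b`, raised in the paper, are lowered with the invertible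
diagonal metric `η`, which only multiplies each component equation by `η a * η b ≠ 0`).
Each contracted (dummy) index pair carries a factor `η i` coming from the inverse
metric. -/
def rhs4 {n : ℕ} (η : Fin n → ℝ) (L : (Fin n → ℝ) → Fin n → Fin n → Fin n → ℝ)
    (x : Fin n → ℝ) (a b c d : Fin n) : ℝ :=
  -- 2 L^{ab}{}_{[c;d]}
  (pd d (L · a b c) x - pd c (L · a b d) x)
  -- + 2 L_{cd}{}^{[a;b]}
  + (pd b (L · c d a) x - pd a (L · c d b) x)
  -- − (4/(n−2)) δ^{[a}_{[c} ( L^{b]i}{}_{d];i} − L^{b]i}{}_{|i|;d]} + L_{d]i}{}^{b];i} − L_{d]i}{}^{|i|;b]} )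
  - (4 / ((n : ℝ) - 2)) *
      asym22 (fun a b c d =>
        gm η a c *
          ∑ i, η i *
            (pd i (L · b i d) x - pd d (L · b i i) x
              + pd i (L · d i b) x - pd b (L · d i i) x)) a b c d
  -- + (8/((n−2)(n−1))) δ^{a}_{[c} δ^{b}_{d]} L^{ij}{}_{i;j}
  + (8 / (((n : ℝ) - 2) * ((n : ℝ) - 1))) *
      ((gm η a c * gm η b d - gm η a d * gm η b c) / 2) *
      ∑ i, ∑ j, η i * η j * pd j (L · i j i) x

/-- Equation (4): `L` is a Lanczos potential for `W` (fully lowered, equivalent form). -/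
def Eq4 {n : ℕ} (η : Fin n → ℝ)
    (W : (Fin n → ℝ) → Fin n → Fin n → Fin n → Fin n → ℝ)
    (L : (Fin n → ℝ) → Fin n → Fin n → Fin n → ℝ) : Prop :=
  ∀ x a b c d, W x a b c d = rhs4 η L x a b c d

/-- The right-hand side of equation (5) (equation (4) in the Lanczos algebraic gauge
`L_{ab}{}^b = 0`), fully lowered form:
`2 L^{ab}{}_{[c;d]} + 2 L_{cd}{}^{[a;b]} − (4/(n−2)) δ^{[a}_{[c} ( L^{b]i}{}_{d];i} + L_{d]i}{}^{b];i} )`. -/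
def rhs5 {n : ℕ} (η : Fin n → ℝ) (L : (Fin n → ℝ) → Fin n → Fin n → Fin n → ℝ)
    (x : Fin n → ℝ) (a b c d : Fin n) : ℝ :=
  (pd d (L · a b c) x - pd c (L · a b d) x)
  + (pd b (L · c d a) x - pd a (L · c d b) x)
  - (4 / ((n : ℝ) - 2)) *
      asym22 (fun a b c d =>
        gm η a c * ∑ i, η i * (pd i (L · b i d) x + pd i (L · d i b) x)) a b c d

/-- Equation (5). -/
def Eq5 {n : ℕ} (η : Fin n → ℝ)
    (W : (Fin n → ℝ) → Fin n → Fin n → Fin n → Fin n → ℝ)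
    (L : (Fin n → ℝ) → Fin n → Fin n → Fin n → ℝ) : Prop :=
  ∀ x a b c d, W x a b c d = rhs5 η L x a b c d

/-- Constraint (8), fully lowered form:
`W^{[ab}{}_{[cd;e]}{}^{f]} = (1/(n−4)) δ^{[a}_{[c} W^{bf]}{}_{de];i}{}^{i}
 + (2/(n−4)) δ^{[a}_{[c} W^{|i|b}{}_{de];i}{}^{f]} + (2/(n−4)) δ^{[a}_{[c} W^{bf]}{}_{|i|d;e]}{}^{i}
 + (4/((n−3)(n−4))) δ^{[a}_{[c} δ^{b}_{d} W^{f]i}{}_{e]j;i}{}^{j}`. -/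
def Constraint8 {n : ℕ} (η : Fin n → ℝ)
    (W : (Fin n → ℝ) → Fin n → Fin n → Fin n → Fin n → ℝ) : Prop :=
  ∀ x a b f c d e,
    asym33 (fun a b f c d e => pd f (pd e (W · a b c d)) x) a b f c d e =
      (1 / ((n : ℝ) - 4)) *
          asym33 (fun a b f c d e =>
            gm η a c * ∑ i, η i * pd i (pd i (W · b f d e)) x) a b f c d e
      + (2 / ((n : ℝ) - 4)) *
          asym33 (fun a b f c d e =>
            gm η a c * ∑ i, η i * pd f (pd i (W · i b d e)) x) a b f c d e
      + (2 / ((n : ℝ) - 4)) *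
          asym33 (fun a b f c d e =>
            gm η a c * ∑ i, η i * pd i (pd e (W · b f i d)) x) a b f c d e
      + (4 / (((n : ℝ) - 3) * ((n : ℝ) - 4))) *
          asym33 (fun a b f c d e =>
            gm η a c * gm η b d *
              ∑ i, ∑ j, η i * η j * pd j (pd i (W · f i e j)) x) a b f c d e

/-- Constraint (10), fully lowered form:
`W^{[ab}{}_{cd;i}{}^{|i|e]} + 2 W^{[ab}{}_{i[c;d]}{}^{|i|e]}
 + (4/(n−3)) δ^{[a}_{[c} W^{b|i}{}_{d]j;i}{}^{j|e]} = 0`,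
antisymmetrized over the upper indices `a b e` and (where indicated) the lower indices
`c d`. -/
def Constraint10 {n : ℕ} (η : Fin n → ℝ)
    (W : (Fin n → ℝ) → Fin n → Fin n → Fin n → Fin n → ℝ) : Prop :=
  ∀ x a b e c d,
    asym3 (fun a b e =>
      (∑ i, η i * pd e (pd i (pd i (W · a b c d))) x)
      + 2 * asym2 (fun c d =>
            ∑ i, η i * pd e (pd i (pd d (W · a b i c))) x) c d
      + (4 / ((n : ℝ) - 3)) * asym2 (fun c d =>
            gm η a c *
              ∑ i, ∑ j, η i * η j * pd e (pd j (pd i (W · b i d j))) x) c d) a b e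
    = 0

/-! ### Auxiliary lemmas for the main theorem -/

section Aux

lemma pd_neg' {n : ℕ} (i : Fin n) (f : (Fin n → ℝ) → ℝ) :
    pd i (fun y => -f y) = fun x => -(pd i f x) := by
  funext x; simp [pd, fderiv_neg]

lemma pd_contDiff2 {n : ℕ} (i : Fin n) {f : (Fin n → ℝ) → ℝ}
    (hf : ContDiff ℝ 3 f) : ContDiff ℝ 2 (pd i f) := by
  have h1 : ContDiff ℝ 2 (fderiv ℝ f) := hf.fderiv_right (by norm_num)
  exact (ContinuousLinearMap.apply ℝ ℝ (Pi.single i 1)).contDiff.comp h1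

lemma pd_contDiff1 {n : ℕ} (i : Fin n) {f : (Fin n → ℝ) → ℝ}
    (hf : ContDiff ℝ 2 f) : ContDiff ℝ 1 (pd i f) := by
  have h1 : ContDiff ℝ 1 (fderiv ℝ f) := hf.fderiv_right (by norm_num)
  exact (ContinuousLinearMap.apply ℝ ℝ (Pi.single i 1)).contDiff.comp h1

lemma pd_diff {n : ℕ} (i : Fin n) {f : (Fin n → ℝ) → ℝ}
    (hf : ContDiff ℝ 2 f) : Differentiable ℝ (pd i f) :=
  (pd_contDiff1 i hf).differentiable (by norm_num)

lemma pd_comm {n : ℕ} (i j : Fin n) {f : (Fin n → ℝ) → ℝ}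
    (hf : ContDiff ℝ 2 f) : pd i (pd j f) = pd j (pd i f) := by
  have hdf : Differentiable ℝ (fderiv ℝ f) := by
    have h1 : ContDiff ℝ 1 (fderiv ℝ f) := hf.fderiv_right (by norm_num)
    exact h1.differentiable (by norm_num)
  funext x
  have key : ∀ v w : Fin n → ℝ,
      fderiv ℝ (fun y => fderiv ℝ f y v) x w = fderiv ℝ (fderiv ℝ f) x w v := by
    intro v w
    rw [fderiv_clm_apply (hdf x) (differentiableAt_const v)]
    simp
  have hsymm := ((hf.contDiffAt (x := x)).isSymmSndFDerivAt (by norm_num)).eq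
  show fderiv ℝ (fun y => fderiv ℝ f y (Pi.single j 1)) x (Pi.single i 1)
      = fderiv ℝ (fun y => fderiv ℝ f y (Pi.single i 1)) x (Pi.single j 1)
  rw [key, key, hsymm]

lemma pd_comb9 {n : ℕ} (i : Fin n) (f1 f2 f3 f4 m1 m2 m3 m4 : (Fin n → ℝ) → ℝ)
    (h1 : Differentiable ℝ f1) (h2 : Differentiable ℝ f2) (h3 : Differentiable ℝ f3)
    (h4 : Differentiable ℝ f4) (h5 : Differentiable ℝ m1) (h6 : Differentiable ℝ m2)
    (h7 : Differentiable ℝ m3) (h8 : Differentiable ℝ m4) (K c1 c2 c3 c4 : ℝ) :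
    pd i (fun y => (f1 y - f2 y) + (f3 y - f4 y)
        - K * (c1 * m1 y - c2 * m2 y - c3 * m3 y + c4 * m4 y)) =
      fun y => (pd i f1 y - pd i f2 y) + (pd i f3 y - pd i f4 y)
        - K * (c1 * pd i m1 y - c2 * pd i m2 y - c3 * pd i m3 y + c4 * pd i m4 y) := by
  funext x
  have H : HasFDerivAt
      (fun y => (f1 y - f2 y) + (f3 y - f4 y)
        - K * (c1 * m1 y - c2 * m2 y - c3 * m3 y + c4 * m4 y))
      ((((fderiv ℝ f1 x - fderiv ℝ f2 x) + (fderiv ℝ f3 x - fderiv ℝ f4 x))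
        - K • (((c1 • fderiv ℝ m1 x - c2 • fderiv ℝ m2 x) - c3 • fderiv ℝ m3 x)
            + c4 • fderiv ℝ m4 x))) x := by
    exact HasFDerivAt.sub
      (((h1 x).hasFDerivAt.sub (h2 x).hasFDerivAt).add
        ((h3 x).hasFDerivAt.sub (h4 x).hasFDerivAt))
      (HasFDerivAt.const_mul
        (((((h5 x).hasFDerivAt.const_mul c1).sub ((h6 x).hasFDerivAt.const_mul c2)).sub
          ((h7 x).hasFDerivAt.const_mul c3)).add
        ((h8 x).hasFDerivAt.const_mul c4)) K)
  simp only [pd, H.fderiv]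
  simp [smul_eq_mul]
  ring

lemma pd_sum_comb {n : ℕ} (i : Fin n) (c : Fin n → ℝ)
    (g h : Fin n → (Fin n → ℝ) → ℝ)
    (hg : ∀ k, Differentiable ℝ (g k)) (hh : ∀ k, Differentiable ℝ (h k)) :
    pd i (fun y => ∑ k, c k * (g k y + h k y)) =
      fun y => ∑ k, c k * (pd i (g k) y + pd i (h k) y) := by
  funext x
  have H : HasFDerivAt (fun y => ∑ k, c k * (g k y + h k y))
      (∑ k, c k • (fderiv ℝ (g k) x + fderiv ℝ (h k) x)) x :=
    HasFDerivAt.fun_sum fun k _ =>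
      (((hg k x).hasFDerivAt.add (hh k x).hasFDerivAt)).const_mul (c k)
  simp only [pd, H.fderiv]
  simp [smul_eq_mul, mul_add]

lemma sum3_comm13 {n : ℕ} (f : Fin n → Fin n → Fin n → ℝ) :
    ∑ i, ∑ j, ∑ k, f i j k = ∑ i, ∑ j, ∑ k, f k j i := by
  calc ∑ i, ∑ j, ∑ k, f i j k
      = ∑ j, ∑ i, ∑ k, f i j k := Finset.sum_comm
    _ = ∑ j, ∑ k, ∑ i, f i j k := Finset.sum_congr rfl fun j _ => Finset.sum_comm
    _ = ∑ k, ∑ j, ∑ i, f i j k := Finset.sum_comm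

lemma sum3_comm23 {n : ℕ} (f : Fin n → Fin n → Fin n → ℝ) :
    ∑ i, ∑ j, ∑ k, f i j k = ∑ i, ∑ j, ∑ k, f i k j :=
  Finset.sum_congr rfl fun _ _ => Finset.sum_comm

lemma sum_delta1 {n : ℕ} (η : Fin n → ℝ) (hη2 : ∀ i, η i * η i = 1)
    (c : Fin n) (f : Fin n → ℝ) : ∑ i, η i * (gm η i c * f i) = f c := by
  have h : ∀ i, η i * (gm η i c * f i) = if i = c then η i * η i * f i else 0 := by
    intro i; by_cases h : i = c <;> simp [gm, h] <;> ring
  rw [Finset.sum_congr rfl fun i _ => h i, Finset.sum_ite_eq' Finset.univ c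
    (fun i => η i * η i * f i)]
  simp [hη2]

lemma sum_delta2 {n : ℕ} (η : Fin n → ℝ) (hη2 : ∀ i, η i * η i = 1)
    (a : Fin n) (f : Fin n → ℝ) : ∑ j, η j * (gm η a j * f j) = f a := by
  have h : ∀ j, η j * (gm η a j * f j) = if a = j then η j * η j * f j else 0 := by
    intro j; by_cases h : a = j
    · subst h; simp [gm]; ring
    · simp [gm, h]
  rw [Finset.sum_congr rfl fun j _ => h j, Finset.sum_ite_eq Finset.univ a
    (fun j => η j * η j * f j)]
  simp [hη2]

lemma pull_sum {n : ℕ} (η : Fin n → ℝ) (g : ℝ) (F G : Fin n → Fin n → Fin n → ℝ) :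
    ∑ i, ∑ j, η i * η j * (g * ∑ k, η k * (F i j k + G i j k))
      = g * (∑ i, ∑ j, ∑ k, η i * η j * η k * F i j k)
        + g * (∑ i, ∑ j, ∑ k, η i * η j * η k * G i j k) := by
  have h : ∀ i j, η i * η j * (g * ∑ k, η k * (F i j k + G i j k))
      = ∑ k, (g * (η i * η j * η k * F i j k) + g * (η i * η j * η k * G i j k)) := by
    intro i j
    rw [Finset.mul_sum, Finset.mul_sum]
    exact Finset.sum_congr rfl fun k _ => by ring
  rw [Finset.sum_congr rfl fun i _ => Finset.sum_congr rfl fun j _ => h i j]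
  simp only [Finset.sum_add_distrib, ← Finset.mul_sum]

/-- The contracted combination `M_{bd} = ∑ η_k (∂_k L_{bkd} + ∂_k L_{dkb})`. -/
def MM {n : ℕ} (η : Fin n → ℝ) (L : (Fin n → ℝ) → Fin n → Fin n → Fin n → ℝ)
    (b d : Fin n) : (Fin n → ℝ) → ℝ :=
  fun y => ∑ k, η k * (pd k (fun z => L z b k d) y + pd k (fun z => L z d k b) y)

end Aux

lemma main_calc {n : ℕ} (hn : (3:ℝ) ≤ (n:ℝ)) (η : Fin n → ℝ)
    (hη2 : ∀ i, η i * η i = 1)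
    (D : Fin n → Fin n → Fin n → Fin n → Fin n → Fin n → ℝ)
    (Dc1 : ∀ p q r s t u, D p q r s t u = D q p r s t u)
    (Dc2 : ∀ p q r s t u, D p q r s t u = D p r q s t u)
    (Da : ∀ p q r s t u, D p q r s t u = - D p q r t s u)
    (a c : Fin n) :
    ∑ i, ∑ j, η i * η j *
      ((D j i j a i c - D j i c a i j) + (D j i i c j a - D j i a c j i)
        - ((n:ℝ)-2)⁻¹ *
          (gm η a c * (∑ k, η k * (D j i k i k j + D j i k j k i))
            - gm η i c * (∑ k, η k * (D j i k a k j + D j i k j k a))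
            - gm η a j * (∑ k, η k * (D j i k i k c + D j i k c k i))
            + gm η i j * (∑ k, η k * (D j i k a k c + D j i k c k a))))
    = (((n:ℝ)-3)/((n:ℝ)-2)) * ∑ i, ∑ j, η i * η j *
        (D j j i a i c + D j j i c i a - D a j i j i c - D a j i c i j
          - D j c i a i j - D j c i j i a) := by
  -- canonical double sums
  set E1 : ℝ := ∑ i, ∑ j, η i * η j * D j j i a i c with hE1
  set E2 : ℝ := ∑ i, ∑ j, η i * η j * D j j i c i a with hE2
  set E3 : ℝ := ∑ i, ∑ j, η i * η j * D a j i j i c with hE3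
  set E4 : ℝ := ∑ i, ∑ j, η i * η j * D a j i c i j with hE4
  set E5 : ℝ := ∑ i, ∑ j, η i * η j * D j c i a i j with hE5
  set E6 : ℝ := ∑ i, ∑ j, η i * η j * D j c i j i a with hE6
  -- E3 and E6 vanish
  have hE3z : E3 = 0 := by
    have h : E3 = -E3 := by
      calc E3 = ∑ i, ∑ j, η j * η i * D a i j i j c := by rw [hE3]; exact Finset.sum_comm
        _ = ∑ i, ∑ j, -(η i * η j * D a j i j i c) := by
            refine Finset.sum_congr rfl fun i _ => Finset.sum_congr rfl fun j _ => ?_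
            rw [Dc2 a i j i j c, Da a j i i j c]; ring
        _ = -E3 := by rw [hE3]; simp [Finset.sum_neg_distrib]
    linarith
  have hE6z : E6 = 0 := by
    have h : E6 = -E6 := by
      calc E6 = ∑ i, ∑ j, η j * η i * D i c j i j a := by rw [hE6]; exact Finset.sum_comm
        _ = ∑ i, ∑ j, -(η i * η j * D j c i j i a) := by
            refine Finset.sum_congr rfl fun i _ => Finset.sum_congr rfl fun j _ => ?_
            rw [Dc1 i c j i j a, Dc2 c i j i j a, Dc1 c j i i j a, Da j c i i j a]; ring
        _ = -E6 := by rw [hE6]; simp [Finset.sum_neg_distrib]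
    linarith
  -- the four T-sums
  have hT1 : ∑ i, ∑ j, η i * η j * D j i j a i c = E1 := by
    rw [hE1]
    exact Finset.sum_congr rfl fun i _ => Finset.sum_congr rfl fun j _ => by
      rw [Dc2 j i j a i c]
  have hT2 : ∑ i, ∑ j, η i * η j * D j i c a i j = E5 := by
    rw [hE5]
    exact Finset.sum_congr rfl fun i _ => Finset.sum_congr rfl fun j _ => by
      rw [Dc2 j i c a i j]
  have hT3 : ∑ i, ∑ j, η i * η j * D j i i c j a = E2 := by
    rw [hE2]
    calc ∑ i, ∑ j, η i * η j * D j i i c j a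
        = ∑ i, ∑ j, η j * η i * D i j j c i a := Finset.sum_comm
      _ = ∑ i, ∑ j, η i * η j * D j j i c i a := by
          refine Finset.sum_congr rfl fun i _ => Finset.sum_congr rfl fun j _ => ?_
          rw [Dc1 i j j c i a, Dc2 j i j c i a]; ring
  have hT4 : ∑ i, ∑ j, η i * η j * D j i a c j i = E4 := by
    rw [hE4]
    calc ∑ i, ∑ j, η i * η j * D j i a c j i
        = ∑ i, ∑ j, η j * η i * D i j a c i j := Finset.sum_comm
      _ = ∑ i, ∑ j, η i * η j * D a j i c i j := by
          refine Finset.sum_congr rfl fun i _ => Finset.sum_congr rfl fun j _ => ?_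
          rw [Dc1 i j a c i j, Dc2 j i a c i j, Dc1 j a i c i j]; ring
  -- the four U-sums
  have hU1 : ∑ i, ∑ j, η i * η j *
      (gm η a c * (∑ k, η k * (D j i k i k j + D j i k j k i))) = 0 := by
    rw [pull_sum]
    have hX : ∑ i, ∑ j, ∑ k, η i * η j * η k * D j i k i k j = 0 := by
      have h : (∑ i, ∑ j, ∑ k, η i * η j * η k * D j i k i k j)
          = -(∑ i, ∑ j, ∑ k, η i * η j * η k * D j i k i k j) := by
        calc ∑ i, ∑ j, ∑ k, η i * η j * η k * D j i k i k j
            = ∑ i, ∑ j, ∑ k, η k * η j * η i * D j k i k i j :=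
              sum3_comm13 (fun i j k => η i * η j * η k * D j i k i k j)
          _ = ∑ i, ∑ j, ∑ k, -(η i * η j * η k * D j i k i k j) := by
              refine Finset.sum_congr rfl fun i _ => Finset.sum_congr rfl fun j _ =>
                Finset.sum_congr rfl fun k _ => ?_
              rw [Dc2 j k i k i j, Da j i k k i j]; ring
          _ = -(∑ i, ∑ j, ∑ k, η i * η j * η k * D j i k i k j) := by
              simp [Finset.sum_neg_distrib]
      linarith
    have hY : ∑ i, ∑ j, ∑ k, η i * η j * η k * D j i k j k i = 0 := by
      have h : (∑ i, ∑ j, ∑ k, η i * η j * η k * D j i k j k i)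
          = -(∑ i, ∑ j, ∑ k, η i * η j * η k * D j i k j k i) := by
        calc ∑ i, ∑ j, ∑ k, η i * η j * η k * D j i k j k i
            = ∑ i, ∑ j, ∑ k, η i * η k * η j * D k i j k j i :=
              sum3_comm23 (fun i j k => η i * η j * η k * D j i k j k i)
          _ = ∑ i, ∑ j, ∑ k, -(η i * η j * η k * D j i k j k i) := by
              refine Finset.sum_congr rfl fun i _ => Finset.sum_congr rfl fun j _ =>
                Finset.sum_congr rfl fun k _ => ?_
              rw [Dc2 k i j k j i, Dc1 k j i k j i, Dc2 j k i k j i, Da j i k k j i]; ring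
          _ = -(∑ i, ∑ j, ∑ k, η i * η j * η k * D j i k j k i) := by
              simp [Finset.sum_neg_distrib]
      linarith
    rw [hX, hY]; ring
  have hU2 : ∑ i, ∑ j, η i * η j *
      (gm η i c * (∑ k, η k * (D j i k a k j + D j i k j k a))) = E5 + E6 := by
    have step1 : ∀ i : Fin n, ∑ j, η i * η j *
        (gm η i c * (∑ k, η k * (D j i k a k j + D j i k j k a)))
        = η i * (gm η i c * (∑ j, η j * (∑ k, η k * (D j i k a k j + D j i k j k a)))) := by
      intro i
      rw [Finset.mul_sum, Finset.mul_sum]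
      exact Finset.sum_congr rfl fun j _ => by ring
    rw [Finset.sum_congr rfl fun i _ => step1 i,
      sum_delta1 η hη2 c (fun i => ∑ j, η j * (∑ k, η k * (D j i k a k j + D j i k j k a)))]
    have expand : ∑ j, η j * (∑ k, η k * (D j c k a k j + D j c k j k a))
        = (∑ j, ∑ k, η j * η k * D j c k a k j) + ∑ j, ∑ k, η j * η k * D j c k j k a := by
      rw [← Finset.sum_add_distrib]
      refine Finset.sum_congr rfl fun j _ => ?_
      rw [Finset.mul_sum, ← Finset.sum_add_distrib]
      exact Finset.sum_congr rfl fun k _ => by ring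
    rw [expand, hE5, hE6]
    congr 1
    · calc ∑ j, ∑ k, η j * η k * D j c k a k j
          = ∑ j, ∑ k, η k * η j * D k c j a j k := Finset.sum_comm
        _ = ∑ i, ∑ j, η i * η j * D j c i a i j :=
            Finset.sum_congr rfl fun i _ => Finset.sum_congr rfl fun j _ => by ring
    · calc ∑ j, ∑ k, η j * η k * D j c k j k a
          = ∑ j, ∑ k, η k * η j * D k c j k j a := Finset.sum_comm
        _ = ∑ i, ∑ j, η i * η j * D j c i j i a :=
            Finset.sum_congr rfl fun i _ => Finset.sum_congr rfl fun j _ => by ring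
  have hU3 : ∑ i, ∑ j, η i * η j *
      (gm η a j * (∑ k, η k * (D j i k i k c + D j i k c k i))) = E3 + E4 := by
    have step1 : ∀ i : Fin n, ∑ j, η i * η j *
        (gm η a j * (∑ k, η k * (D j i k i k c + D j i k c k i)))
        = η i * (∑ k, η k * (D a i k i k c + D a i k c k i)) := by
      intro i
      have h : ∀ j : Fin n, η i * η j * (gm η a j * (∑ k, η k * (D j i k i k c + D j i k c k i)))
          = η j * (gm η a j * (η i * (∑ k, η k * (D j i k i k c + D j i k c k i)))) := by
        intro j; ring
      rw [Finset.sum_congr rfl fun j _ => h j,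
        sum_delta2 η hη2 a (fun j => η i * (∑ k, η k * (D j i k i k c + D j i k c k i)))]
    rw [Finset.sum_congr rfl fun i _ => step1 i]
    have expand : ∑ i, η i * (∑ k, η k * (D a i k i k c + D a i k c k i))
        = (∑ i, ∑ k, η i * η k * D a i k i k c) + ∑ i, ∑ k, η i * η k * D a i k c k i := by
      rw [← Finset.sum_add_distrib]
      refine Finset.sum_congr rfl fun i _ => ?_
      rw [Finset.mul_sum, ← Finset.sum_add_distrib]
      exact Finset.sum_congr rfl fun k _ => by ring
    rw [expand, hE3, hE4]
    congr 1
    · calc ∑ i, ∑ k, η i * η k * D a i k i k c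
          = ∑ i, ∑ k, η k * η i * D a k i k i c := Finset.sum_comm
        _ = ∑ i, ∑ j, η i * η j * D a j i j i c :=
            Finset.sum_congr rfl fun i _ => Finset.sum_congr rfl fun j _ => by ring
    · calc ∑ i, ∑ k, η i * η k * D a i k c k i
          = ∑ i, ∑ k, η k * η i * D a k i c i k := Finset.sum_comm
        _ = ∑ i, ∑ j, η i * η j * D a j i c i j :=
            Finset.sum_congr rfl fun i _ => Finset.sum_congr rfl fun j _ => by ring
  have hU4 : ∑ i, ∑ j, η i * η j *
      (gm η i j * (∑ k, η k * (D j i k a k c + D j i k c k a))) = E1 + E2 := by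
    have step1 : ∀ i : Fin n, ∑ j, η i * η j *
        (gm η i j * (∑ k, η k * (D j i k a k c + D j i k c k a)))
        = η i * (∑ k, η k * (D i i k a k c + D i i k c k a)) := by
      intro i
      have h : ∀ j : Fin n, η i * η j * (gm η i j * (∑ k, η k * (D j i k a k c + D j i k c k a)))
          = η j * (gm η i j * (η i * (∑ k, η k * (D j i k a k c + D j i k c k a)))) := by
        intro j; ring
      rw [Finset.sum_congr rfl fun j _ => h j,
        sum_delta2 η hη2 i (fun j => η i * (∑ k, η k * (D j i k a k c + D j i k c k a)))]
    rw [Finset.sum_congr rfl fun i _ => step1 i]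
    have expand : ∑ i, η i * (∑ k, η k * (D i i k a k c + D i i k c k a))
        = (∑ i, ∑ k, η i * η k * D i i k a k c) + ∑ i, ∑ k, η i * η k * D i i k c k a := by
      rw [← Finset.sum_add_distrib]
      refine Finset.sum_congr rfl fun i _ => ?_
      rw [Finset.mul_sum, ← Finset.sum_add_distrib]
      exact Finset.sum_congr rfl fun k _ => by ring
    rw [expand, hE1, hE2]
    congr 1
    · calc ∑ i, ∑ k, η i * η k * D i i k a k c
          = ∑ i, ∑ k, η k * η i * D k k i a i c := Finset.sum_comm
        _ = ∑ i, ∑ j, η i * η j * D j j i a i c :=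
            Finset.sum_congr rfl fun i _ => Finset.sum_congr rfl fun j _ => by ring
    · calc ∑ i, ∑ k, η i * η k * D i i k c k a
          = ∑ i, ∑ k, η k * η i * D k k i c i a := Finset.sum_comm
        _ = ∑ i, ∑ j, η i * η j * D j j i c i a :=
            Finset.sum_congr rfl fun i _ => Finset.sum_congr rfl fun j _ => by ring
  -- expand the left-hand side
  have expandL : ∑ i, ∑ j, η i * η j *
      ((D j i j a i c - D j i c a i j) + (D j i i c j a - D j i a c j i)
        - ((n:ℝ)-2)⁻¹ *
          (gm η a c * (∑ k, η k * (D j i k i k j + D j i k j k i))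
            - gm η i c * (∑ k, η k * (D j i k a k j + D j i k j k a))
            - gm η a j * (∑ k, η k * (D j i k i k c + D j i k c k i))
            + gm η i j * (∑ k, η k * (D j i k a k c + D j i k c k a))))
      = (∑ i, ∑ j, η i * η j * D j i j a i c) - (∑ i, ∑ j, η i * η j * D j i c a i j)
        + (∑ i, ∑ j, η i * η j * D j i i c j a) - (∑ i, ∑ j, η i * η j * D j i a c j i)
        - ((n:ℝ)-2)⁻¹ *
          ((∑ i, ∑ j, η i * η j * (gm η a c * (∑ k, η k * (D j i k i k j + D j i k j k i))))
            - (∑ i, ∑ j, η i * η j * (gm η i c * (∑ k, η k * (D j i k a k j + D j i k j k a))))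
            - (∑ i, ∑ j, η i * η j * (gm η a j * (∑ k, η k * (D j i k i k c + D j i k c k i))))
            + (∑ i, ∑ j, η i * η j * (gm η i j * (∑ k, η k * (D j i k a k c + D j i k c k a))))) := by
    have h : ∀ i j, η i * η j *
        ((D j i j a i c - D j i c a i j) + (D j i i c j a - D j i a c j i)
          - ((n:ℝ)-2)⁻¹ *
            (gm η a c * (∑ k, η k * (D j i k i k j + D j i k j k i))
              - gm η i c * (∑ k, η k * (D j i k a k j + D j i k j k a))
              - gm η a j * (∑ k, η k * (D j i k i k c + D j i k c k i))
              + gm η i j * (∑ k, η k * (D j i k a k c + D j i k c k a))))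
        = η i * η j * D j i j a i c - η i * η j * D j i c a i j
          + η i * η j * D j i i c j a - η i * η j * D j i a c j i
          - ((n:ℝ)-2)⁻¹ *
            (η i * η j * (gm η a c * (∑ k, η k * (D j i k i k j + D j i k j k i)))
              - η i * η j * (gm η i c * (∑ k, η k * (D j i k a k j + D j i k j k a)))
              - η i * η j * (gm η a j * (∑ k, η k * (D j i k i k c + D j i k c k i)))
              + η i * η j * (gm η i j * (∑ k, η k * (D j i k a k c + D j i k c k a)))) := by
      intro i j; ring
    rw [Finset.sum_congr rfl fun i _ => Finset.sum_congr rfl fun j _ => h i j]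
    simp only [Finset.sum_add_distrib, Finset.sum_sub_distrib, ← Finset.mul_sum]
  -- expand the right-hand side
  have expandR : ∑ i, ∑ j, η i * η j *
      (D j j i a i c + D j j i c i a - D a j i j i c - D a j i c i j
        - D j c i a i j - D j c i j i a)
      = E1 + E2 - E3 - E4 - E5 - E6 := by
    have h : ∀ i j, η i * η j *
        (D j j i a i c + D j j i c i a - D a j i j i c - D a j i c i j
          - D j c i a i j - D j c i j i a)
        = η i * η j * D j j i a i c + η i * η j * D j j i c i a
          - η i * η j * D a j i j i c - η i * η j * D a j i c i j
          - η i * η j * D j c i a i j - η i * η j * D j c i j i a := by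
      intro i j; ring
    rw [Finset.sum_congr rfl fun i _ => Finset.sum_congr rfl fun j _ => h i j]
    simp only [Finset.sum_add_distrib, Finset.sum_sub_distrib]
    rfl
  rw [expandL, expandR, hT1, hT2, hT3, hT4, hU1, hU2, hU3, hU4, hE3z, hE6z]
  have hne : (n:ℝ) - 2 ≠ 0 := by linarith
  field_simp
  ring

/-- **Double contraction of the integrability condition (equation (7), flat space).**
If `W` (`C²`, with the algebraic symmetries and vanishing trace) and `L` (`C³`,
`L_{abc} = L_{[ab]c}`, `L_{ab}{}^b = 0`) satisfy equation (5) on flat `ℝⁿ`, then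
`W^{ai}{}_{cj;i}{}^j = ((n−3)/(n−2)) ( L^{ai}{}_{c;ij}{}^j + L_c{}^{ia}{}_{;ij}{}^j
 − L^{ji}{}_{c;ij}{}^a − L_c{}^{ij}{}_{;ij}{}^a − L^{ai}{}_{j;ic}{}^j − L_j{}^{ia}{}_{;ic}{}^j )`. -/
theorem doubly_contracted_integrability_condition
    (n : ℕ) (hn : 3 ≤ n) (η : Fin n → ℝ) (hη : ∀ i, η i = 1 ∨ η i = -1)
    (W : (Fin n → ℝ) → Fin n → Fin n → Fin n → Fin n → ℝ)
    (hWC2 : ∀ a b c d, ContDiff ℝ 2 (fun x => W x a b c d))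
    (hW1 : ∀ x a b c d, W x a b c d = - W x b a c d)
    (hW2 : ∀ x a b c d, W x a b c d = - W x a b d c)
    (hW3 : ∀ x a b c d, W x a b c d = W x c d a b)
    (hWtr : ∀ x b d, ∑ a, η a * W x a b a d = 0)
    (L : (Fin n → ℝ) → Fin n → Fin n → Fin n → ℝ)
    (hLC3 : ∀ a b c, ContDiff ℝ 3 (fun x => L x a b c))
    (hLasym : ∀ x a b c, L x a b c = - L x b a c)
    (hgauge : ∀ x a, ∑ b, η b * L x a b b = 0)
    (hEq5 : Eq5 η W L) :
    ∀ x a c,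
      (∑ i, ∑ j, η i * η j * pd j (pd i (W · a i c j)) x) =
        (((n : ℝ) - 3) / ((n : ℝ) - 2)) *
          ∑ i, ∑ j, η i * η j *
            (pd j (pd j (pd i (L · a i c))) x
              + pd j (pd j (pd i (L · c i a))) x
              - pd a (pd j (pd i (L · j i c))) x
              - pd a (pd j (pd i (L · c i j))) x
              - pd j (pd c (pd i (L · a i j))) x
              - pd j (pd c (pd i (L · j i a))) x) := by
  intro x a c
  have hn' : (3:ℝ) ≤ (n:ℝ) := by exact_mod_cast hn
  have hη2 : ∀ i, η i * η i = 1 := fun i => by rcases hη i with h | h <;> rw [h] <;> norm_num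
  -- differentiability bookkeeping
  have hC2pd : ∀ (k : Fin n) s t u, ContDiff ℝ 2 (pd k (fun z => L z s t u)) :=
    fun k s t u => pd_contDiff2 k (hLC3 s t u)
  have hdiff1 : ∀ (k : Fin n) s t u, Differentiable ℝ (pd k (fun z => L z s t u)) :=
    fun k s t u => pd_diff k ((hLC3 s t u).of_le (by norm_num))
  have hdiff2 : ∀ (p k : Fin n) s t u,
      Differentiable ℝ (pd p (pd k (fun z => L z s t u))) :=
    fun p k s t u => pd_diff p (hC2pd k s t u)
  have hMMd : ∀ b d, Differentiable ℝ (MM η L b d) := by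
    intro b d
    exact Differentiable.fun_sum fun k _ =>
      (((hdiff1 k b k d).add (hdiff1 k d k b)).const_mul (η k))
  have hMM1 : ∀ (b d i : Fin n), pd i (MM η L b d) =
      fun y => ∑ k, η k * (pd i (pd k (fun z => L z b k d)) y
        + pd i (pd k (fun z => L z d k b)) y) := by
    intro b d i
    exact pd_sum_comb i η (fun k => pd k (fun z => L z b k d))
      (fun k => pd k (fun z => L z d k b))
      (fun k => hdiff1 k b k d) (fun k => hdiff1 k d k b)
  have hMMd1 : ∀ (i : Fin n) b d, Differentiable ℝ (pd i (MM η L b d)) := by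
    intro i b d
    rw [hMM1 b d i]
    exact Differentiable.fun_sum fun k _ =>
      (((hdiff2 i k b k d).add (hdiff2 i k d k b)).const_mul (η k))
  have hMM2 : ∀ (b d i j : Fin n), pd j (pd i (MM η L b d)) =
      fun y => ∑ k, η k * (pd j (pd i (pd k (fun z => L z b k d))) y
        + pd j (pd i (pd k (fun z => L z d k b))) y) := by
    intro b d i j
    rw [hMM1 b d i]
    exact pd_sum_comb j η (fun k => pd i (pd k (fun z => L z b k d)))
      (fun k => pd i (pd k (fun z => L z d k b)))
      (fun k => hdiff2 i k b k d) (fun k => hdiff2 i k d k b)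
  -- symmetry properties of third derivatives
  have Dc1 : ∀ p q r s t u : Fin n,
      pd p (pd q (pd r (fun z => L z s t u))) x = pd q (pd p (pd r (fun z => L z s t u))) x :=
    fun p q r s t u => congrFun (pd_comm p q (hC2pd r s t u)) x
  have Dc2 : ∀ p q r s t u : Fin n,
      pd p (pd q (pd r (fun z => L z s t u))) x = pd p (pd r (pd q (fun z => L z s t u))) x :=
    fun p q r s t u =>
      congrFun (congrArg (pd p) (pd_comm q r ((hLC3 s t u).of_le (by norm_num)))) x
  have Da : ∀ p q r s t u : Fin n,
      pd p (pd q (pd r (fun z => L z s t u))) x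
        = -pd p (pd q (pd r (fun z => L z t s u))) x := by
    intro p q r s t u
    have h1 : (fun z => L z s t u) = fun z => -(L z t s u) := funext fun z => hLasym z s t u
    rw [h1, pd_neg', pd_neg', pd_neg']
  -- expansion of the doubly differentiated equation (5)
  have hexp : ∀ i j : Fin n, pd j (pd i (fun y => W y a i c j)) x =
      ((pd j (pd i (pd j (fun z => L z a i c))) x - pd j (pd i (pd c (fun z => L z a i j))) x)
        + (pd j (pd i (pd i (fun z => L z c j a))) x - pd j (pd i (pd a (fun z => L z c j i))) x)
        - ((n:ℝ)-2)⁻¹ *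
          (gm η a c * (∑ k, η k * (pd j (pd i (pd k (fun z => L z i k j))) x
              + pd j (pd i (pd k (fun z => L z j k i))) x))
            - gm η i c * (∑ k, η k * (pd j (pd i (pd k (fun z => L z a k j))) x
              + pd j (pd i (pd k (fun z => L z j k a))) x))
            - gm η a j * (∑ k, η k * (pd j (pd i (pd k (fun z => L z i k c))) x
              + pd j (pd i (pd k (fun z => L z c k i))) x))
            + gm η i j * (∑ k, η k * (pd j (pd i (pd k (fun z => L z a k c))) x
              + pd j (pd i (pd k (fun z => L z c k a))) x)))) := by
    intro i j
    have h0 : (fun y => W y a i c j) = fun y =>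
        (pd j (fun z => L z a i c) y - pd c (fun z => L z a i j) y)
        + (pd i (fun z => L z c j a) y - pd a (fun z => L z c j i) y)
        - ((n:ℝ)-2)⁻¹ * (gm η a c * MM η L i j y - gm η i c * MM η L a j y
            - gm η a j * MM η L i c y + gm η i j * MM η L a c y) := by
      funext y
      rw [hEq5 y a i c j]
      simp only [rhs5, asym22, MM]
      ring
    rw [h0,
      pd_comb9 i (pd j (fun z => L z a i c)) (pd c (fun z => L z a i j))
        (pd i (fun z => L z c j a)) (pd a (fun z => L z c j i))
        (MM η L i j) (MM η L a j) (MM η L i c) (MM η L a c)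
        (hdiff1 j a i c) (hdiff1 c a i j) (hdiff1 i c j a) (hdiff1 a c j i)
        (hMMd i j) (hMMd a j) (hMMd i c) (hMMd a c)
        (((n:ℝ)-2)⁻¹) (gm η a c) (gm η i c) (gm η a j) (gm η i j),
      pd_comb9 j (pd i (pd j (fun z => L z a i c))) (pd i (pd c (fun z => L z a i j)))
        (pd i (pd i (fun z => L z c j a))) (pd i (pd a (fun z => L z c j i)))
        (pd i (MM η L i j)) (pd i (MM η L a j)) (pd i (MM η L i c)) (pd i (MM η L a c))
        (hdiff2 i j a i c) (hdiff2 i c a i j) (hdiff2 i i c j a) (hdiff2 i a c j i)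
        (hMMd1 i i j) (hMMd1 i a j) (hMMd1 i i c) (hMMd1 i a c)
        (((n:ℝ)-2)⁻¹) (gm η a c) (gm η i c) (gm η a j) (gm η i j)]
    simp only [hMM2]
  -- put everything together
  calc (∑ i, ∑ j, η i * η j * pd j (pd i (W · a i c j)) x)
      = ∑ i, ∑ j, η i * η j *
        ((pd j (pd i (pd j (fun z => L z a i c))) x - pd j (pd i (pd c (fun z => L z a i j))) x)
          + (pd j (pd i (pd i (fun z => L z c j a))) x - pd j (pd i (pd a (fun z => L z c j i))) x)
          - ((n:ℝ)-2)⁻¹ *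
            (gm η a c * (∑ k, η k * (pd j (pd i (pd k (fun z => L z i k j))) x
                + pd j (pd i (pd k (fun z => L z j k i))) x))
              - gm η i c * (∑ k, η k * (pd j (pd i (pd k (fun z => L z a k j))) x
                + pd j (pd i (pd k (fun z => L z j k a))) x))
              - gm η a j * (∑ k, η k * (pd j (pd i (pd k (fun z => L z i k c))) x
                + pd j (pd i (pd k (fun z => L z c k i))) x))
              + gm η i j * (∑ k, η k * (pd j (pd i (pd k (fun z => L z a k c))) x
                + pd j (pd i (pd k (fun z => L z c k a))) x)))) :=
        Finset.sum_congr rfl fun i _ => Finset.sum_congr rfl fun j _ => by rw [hexp i j]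
    _ = (((n:ℝ)-3)/((n:ℝ)-2)) * ∑ i, ∑ j, η i * η j *
          (pd j (pd j (pd i (fun z => L z a i c))) x
            + pd j (pd j (pd i (fun z => L z c i a))) x
            - pd a (pd j (pd i (fun z => L z j i c))) x
            - pd a (pd j (pd i (fun z => L z c i j))) x
            - pd j (pd c (pd i (fun z => L z a i j))) x
            - pd j (pd c (pd i (fun z => L z j i a))) x) :=
        main_calc hn' η hη2
          (fun p q r s t u => pd p (pd q (pd r (fun z => L z s t u))) x)
          Dc1 Dc2 Da a c
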